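/- Let D : L → L be an additive map that is a derivation of the bracket, i.e. D⁅x,y⁆ = ⁅Dx, y⁆ + ⁅x, Dy⁆ for all x, y ∈ L. Given H ∈ L, define Q : ℕ → L by Q 2 = H and Q (n+1) = D (Q n) for n ≥ 2. Let M ≥ 1. If ⁅H, Q (2m+1)⁆ = 0 holds for all m with 1 ≤ m ≤ M, then ⁅Q (k+1), Q (l+1)⁆ = 0 holds for all k, l ≥ 1 with k + l ≤ 2M + 2. (The derivation generalization of Lemma 1, which the paper uses for its theorem on parametrized Hamiltonians, whose proof only uses that the boost map satisfies the Jacobi/Leibniz identity.) -/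
import Mathlib


/-- derivation generalization of Lemma 1: Let `D : L → L` be an
additive derivation of the bracket of a Lie ring `L`. With `Q 2 = H` and
`Q (n+1) = D (Q n)` for `n ≥ 2`, if `⁅H, Q (2m+1)⁆ = 0` for all `1 ≤ m ≤ M`,
then `⁅Q (k+1), Q (l+1)⁆ = 0` for all `k, l ≥ 1` with `k + l ≤ 2M + 2`. -/
theorem property_boost_derivation {L : Type*} [LieRing L] (D : L → L)
    (hadd : ∀ x y, D (x + y) = D x + D y)
    (hder : ∀ x y, D ⁅x, y⁆ = ⁅D x, y⁆ + ⁅x, D y⁆)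
    (H : L) (Q : ℕ → L) (hQ2 : Q 2 = H)
    (hQrec : ∀ n, 2 ≤ n → Q (n + 1) = D (Q n))
    (M : ℕ) (hM : 1 ≤ M)
    (h : ∀ m, 1 ≤ m → m ≤ M → ⁅H, Q (2 * m + 1)⁆ = 0) :
    ∀ k l, 1 ≤ k → 1 ≤ l → k + l ≤ 2 * M + 2 → ⁅Q (k + 1), Q (l + 1)⁆ = 0 := by
  have hD0 : D 0 = 0 := by
    have h0 := hadd 0 0
    rw [add_zero] at h0
    exact add_eq_left.mp h0.symm
  have hQsucc : ∀ k, 1 ≤ k → Q (k + 2) = D (Q (k + 1)) := by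
    intro k hk
    exact hQrec (k + 1) (by omega)
  have hrec : ∀ k l, 1 ≤ k → 1 ≤ l →
      ⁅Q (k + 2), Q (l + 1)⁆ + ⁅Q (k + 1), Q (l + 2)⁆ = D ⁅Q (k + 1), Q (l + 1)⁆ := by
    intro k l hk hl
    rw [hder, hQsucc k hk, hQsucc l hl]
  -- main diagonal induction: diagonal k+l = s+2 vanishes for s ≤ 2M
  have main : ∀ s, s ≤ 2 * M →
      ∀ k l, 1 ≤ k → 1 ≤ l → k + l = s + 2 → ⁅Q (k + 1), Q (l + 1)⁆ = 0 := by
    intro s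
    induction s with
    | zero =>
      intro _ k l hk hl hkl
      have : k = 1 ∧ l = 1 := by omega
      obtain ⟨rfl, rfl⟩ := this
      exact lie_self _
    | succ s ih =>
      intro hs k l hk hl hkl
      have prev := ih (by omega)
      -- alternation on the new diagonal
      have alt : ∀ a b, 1 ≤ a → 1 ≤ b → a + b = s + 2 →
          ⁅Q (a + 2), Q (b + 1)⁆ = -⁅Q (a + 1), Q (b + 2)⁆ := by
        intro a b ha hb hab
        have := hrec a b ha hb
        rw [prev a b ha hb hab, hD0] at this
        exact eq_neg_of_add_eq_zero_left this
      -- sign formula along the new diagonal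
      have chain : ∀ a b, 1 ≤ a → 1 ≤ b → a + b = s + 3 →
          ⁅Q (a + 1), Q (b + 1)⁆ = ((-1 : ℤ) ^ (a - 1)) • ⁅Q 2, Q (s + 3)⁆ := by
        intro a
        induction a with
        | zero => intro b ha; omega
        | succ a iha =>
          intro b ha hb hab
          rcases Nat.eq_zero_or_pos a with rfl | hapos
          · simp only [Nat.zero_add, Nat.sub_self, pow_zero, one_smul]
            have hb' : b = s + 2 := by omega
            subst hb'
            norm_num
          · have hb1 : 1 ≤ b + 1 := by omega
            have habs : a + (b + 1) = s + 3 := by omega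
            have h1 := iha (b + 1) hapos hb1 (by omega)
            have h2 := alt a b hapos hb (by omega)
            have hone : a + 1 + 1 = a + 2 := by ring
            rw [hone, h2, h1]
            rw [← neg_smul]
            congr 1
            have : a + 1 - 1 = (a - 1) + 1 := by omega
            rw [this, pow_succ]
            ring
      -- the anchor vanishes
      have anchor : ⁅Q 2, Q (s + 3)⁆ = 0 := by
        rcases Nat.even_or_odd s with he | ho
        · -- s even: s + 3 = 2m + 1 with m = s/2 + 1 ≤ M
          obtain ⟨t, rfl⟩ := he
          have heq : t + t + 3 = 2 * (t + 1) + 1 := by omega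
          rw [hQ2, heq]
          exact h (t + 1) (by omega) (by omega)
        · -- s odd: midpoint gives the anchor
          obtain ⟨t, rfl⟩ := ho
          have hmid := chain (t + 2) (t + 2) (by omega) (by omega) (by omega)
          rw [lie_self] at hmid
          have : ((-1 : ℤ) ^ (t + 2 - 1)) • ⁅Q 2, Q (2 * t + 1 + 3)⁆ = 0 := hmid.symm
          rcases Nat.even_or_odd (t + 2 - 1) with hev | hod
          · rwa [hev.neg_one_pow, one_smul] at this
          · rw [hod.neg_one_pow, neg_smul, neg_eq_zero, one_smul] at this
            exact this
      rw [chain k l hk hl hkl, anchor, smul_zero]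
  intro k l hk hl hkl
  exact main (k + l - 2) (by omega) k l hk hl (by omega)
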